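/- For positive integers r, s, k with 1 ≤ k ≤ r+s+1, the identity ((r+1)!·s!/(r+s+1))·B(r+s+1, s, k) = (r!·(s+1)!/(r+s+1))·B(r+s+1, s+1, k) + (r-s)·(r!·s!/(r+s))·B(r+s, s, k) holds, where B(n,p,k) = (n/k)·Σ_{j≥0} C(p,j)·C(n-p,j)·C(n-j-1,k-j-1). -/

import Mathlib

open Finset

/-- Binomial coefficient `C(a,b)` for integers, with `C(a,b) = 0` unless `0 ≤ b ≤ a`. -/
def C (a b : ℤ) : ℚ := if 0 ≤ b ∧ b ≤ a then (Nat.choose a.toNat b.toNat : ℚ) else 0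

/-- `B(n,p,k) = (n/k) · Σ_{r≥0} C(p,r)·C(n-p,r)·C(n-r-1,k-r-1)`. -/
def B (n p k : ℕ) : ℚ :=
  ((n : ℚ) / k) * ∑ r ∈ range (n + 1),
    C p r * C ((n : ℤ) - p) r * C ((n : ℤ) - r - 1) ((k : ℤ) - r - 1)

lemma C_neg {a b : ℤ} (hb : b < 0) : C a b = 0 := by simp [C]; omega
lemma C_gt {a b : ℤ} (h : a < b) : C a b = 0 := by simp [C]; omega
lemma C_pascal (a b : ℤ) (ha : 0 ≤ a) : C (a+1) b = C a b + C a (b-1) := by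
  unfold C
  by_cases hb0 : 0 ≤ b
  · by_cases hba : b ≤ a + 1
    · rcases eq_or_lt_of_le hb0 with h0 | h1
      · rw [if_pos ⟨hb0, hba⟩, if_pos ⟨hb0, by omega⟩, if_neg (by omega)]
        subst h0
        simp
      · have hb1 : 1 ≤ b := h1
        rcases eq_or_lt_of_le hba with he | hlt
        · -- b = a+1
          rw [if_pos ⟨hb0, hba⟩, if_neg (by omega), if_pos ⟨by omega, by omega⟩]
          rw [he]
          have h1 : ((a:ℤ)+1).toNat = a.toNat + 1 := by omega
          have h2 : ((a:ℤ)+1-1).toNat = a.toNat := by omega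
          rw [h1, h2, Nat.choose_self, Nat.choose_self]
          ring
        · -- 1 ≤ b ≤ a
          have hba' : b ≤ a := by omega
          rw [if_pos ⟨hb0, hba⟩, if_pos ⟨hb0, hba'⟩, if_pos ⟨by omega, by omega⟩]
          have h1 : ((a:ℤ)+1).toNat = a.toNat + 1 := by omega
          have h2 : b.toNat = (b-1).toNat + 1 := by omega
          rw [h1, h2, Nat.choose_succ_succ']
          push_cast
          ring
    · rw [if_neg (by omega), if_neg (by omega), if_neg (by omega)]; ring
  · rw [if_neg (by omega), if_neg (by omega), if_neg (by omega)]; ring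
lemma C_absorb (a j : ℤ) : (j:ℚ) * C a j = ((a:ℚ) - j + 1) * C a (j-1) := by
  unfold C
  by_cases h1 : 0 ≤ j ∧ j ≤ a
  · rcases eq_or_lt_of_le h1.1 with h0 | hj1
    · rw [if_pos h1, if_neg (by omega)]
      simp [← h0]
    · have hj1' : 1 ≤ j := hj1
      rw [if_pos h1, if_pos ⟨by omega, by omega⟩]
      have key := Nat.choose_succ_right_eq a.toNat (j-1).toNat
      have h2 : (j-1).toNat + 1 = j.toNat := by omega
      rw [h2] at key
      have h3 : a.toNat - (j-1).toNat = (a - j + 1).toNat := by omega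
      rw [h3] at key
      have := congrArg (fun x : ℕ => (x : ℚ)) key
      push_cast at this
      have h4 : ((a - j + 1).toNat : ℚ) = (a:ℚ) - j + 1 := by
        have h6 : (0:ℤ) ≤ a - j + 1 := by omega
        have := Int.toNat_of_nonneg h6
        exact_mod_cast congrArg (fun x : ℤ => (x:ℚ)) this
      rw [h4] at this
      have h5 : ((j.toNat : ℚ)) = (j:ℚ) := by
        exact_mod_cast congrArg (fun x : ℤ => (x:ℚ)) (Int.toNat_of_nonneg h1.1)
      rw [h5] at this
      linear_combination this
  · by_cases h2 : 0 ≤ j - 1 ∧ j - 1 ≤ a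
    · -- j = a+1 case (since not (j ≤ a) while j-1 ≤ a, and 0 ≤ j-1)
      rw [if_neg h1, if_pos h2]
      have hc : ((a:ℚ) - (j:ℚ) + 1) = 0 := by
        have hja : j = a + 1 := by omega
        subst hja; push_cast; ring
      rw [hc]; ring
    · rw [if_neg h1, if_neg h2]; ring

lemma step (r s k : ℕ) (hr : 1 ≤ r) (hs : 1 ≤ s) (x : ℤ) (hx : 0 ≤ x) :
    ((r:ℚ)+1) * (C s x * C ((r:ℤ)+1) x * C ((r:ℤ)+s-x) ((k:ℤ)-x-1))
      - ((s:ℚ)+1) * (C ((s:ℤ)+1) x * C r x * C ((r:ℤ)+s-x) ((k:ℤ)-x-1))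
      - ((r:ℚ)-s) * (C s x * C r x * C ((r:ℤ)+s-x-1) ((k:ℤ)-x-1))
    = ((r:ℚ)-s) * (C s x * C r x * C ((r:ℤ)+s-x-1) ((k:ℤ)-x-2))
      - ((r:ℚ)-s) * (C s (x-1) * C r (x-1) * C ((r:ℤ)+s-x) ((k:ℤ)-x-1)) := by
  have hr' : (1:ℤ) ≤ r := by exact_mod_cast hr
  have hs' : (1:ℤ) ≤ s := by exact_mod_cast hs
  have hP : C ((s:ℤ)+1) x = C s x + C s (x-1) := C_pascal s x (by omega)
  have hQ : C ((r:ℤ)+1) x = C r x + C r (x-1) := C_pascal r x (by omega)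
  have hW : ((r:ℚ)+1) * (C s x * C r (x-1)) - ((s:ℚ)+1) * (C s (x-1) * C r x)
      + ((r:ℚ)-s) * (C s (x-1) * C r (x-1)) = 0 := by
    rcases eq_or_lt_of_le hx with h0 | h1
    · have e1 : C (s:ℤ) (x-1) = 0 := C_neg (by omega)
      have e2 : C (r:ℤ) (x-1) = 0 := C_neg (by omega)
      rw [e1, e2]; ring
    · have hxne : (x:ℚ) ≠ 0 := by
        have : (0:ℚ) < (x:ℚ) := by exact_mod_cast h1
        linarith
      have h1s := C_absorb s x
      have h1r := C_absorb r x
      apply mul_left_cancel₀ hxne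
      rw [mul_zero]
      linear_combination ((r:ℚ)+1) * C (r:ℤ) (x-1) * h1s - ((s:ℚ)+1) * C (s:ℤ) (x-1) * h1r
  have hX : C (s:ℤ) x * C (r:ℤ) x *
      (C ((r:ℤ)+s-x) ((k:ℤ)-x-1) - C ((r:ℤ)+s-x-1) ((k:ℤ)-x-1)
        - C ((r:ℤ)+s-x-1) ((k:ℤ)-x-2)) = 0 := by
    by_cases hj : x ≤ (r:ℤ)+s-1
    · have hp := C_pascal ((r:ℤ)+s-x-1) ((k:ℤ)-x-1) (by omega)
      rw [show (r:ℤ)+s-x-1+1 = (r:ℤ)+s-x by ring, show (k:ℤ)-x-1-1 = (k:ℤ)-x-2 by ring] at hp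
      rw [hp]; ring
    · have : C (s:ℤ) x = 0 := C_gt (by omega)
      rw [this]; ring
  rw [hP, hQ]
  linear_combination ((r:ℚ)-s) * hX + C ((r:ℤ)+s-x) ((k:ℤ)-x-1) * hW

lemma keysum (r s k : ℕ) (hr : 1 ≤ r) (hs : 1 ≤ s) :
    ∑ j ∈ range (r+s+2),
      ( ((r:ℚ)+1) * (C s (j:ℤ) * C ((r:ℤ)+1) (j:ℤ) * C ((r:ℤ)+s-j) ((k:ℤ)-j-1))
        - ((s:ℚ)+1) * (C ((s:ℤ)+1) (j:ℤ) * C r (j:ℤ) * C ((r:ℤ)+s-j) ((k:ℤ)-j-1))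
        - ((r:ℚ)-s) * (C s (j:ℤ) * C r (j:ℤ) * C ((r:ℤ)+s-j-1) ((k:ℤ)-j-1)) ) = 0 := by
  set g : ℤ → ℚ := fun x => ((r:ℚ)-s) * (C s (x-1) * C r (x-1) * C ((r:ℤ)+s-x) ((k:ℤ)-x-1))
    with hg
  have hstep : ∀ j ∈ range (r+s+2),
      ( ((r:ℚ)+1) * (C s (j:ℤ) * C ((r:ℤ)+1) (j:ℤ) * C ((r:ℤ)+s-j) ((k:ℤ)-j-1))
        - ((s:ℚ)+1) * (C ((s:ℤ)+1) (j:ℤ) * C r (j:ℤ) * C ((r:ℤ)+s-j) ((k:ℤ)-j-1))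
        - ((r:ℚ)-s) * (C s (j:ℤ) * C r (j:ℤ) * C ((r:ℤ)+s-j-1) ((k:ℤ)-j-1)) )
      = (fun i : ℕ => g (i:ℤ)) (j+1) - (fun i : ℕ => g (i:ℤ)) j := by
    intro j _
    simp only [hg]
    rw [step r s k hr hs (j:ℤ) (by positivity)]
    push_cast
    rw [show (j:ℤ)+1-1 = (j:ℤ) by ring, show (r:ℤ)+s-((j:ℤ)+1) = (r:ℤ)+s-j-1 by ring,
      show (k:ℤ)-((j:ℤ)+1)-1 = (k:ℤ)-j-2 by ring]
  rw [Finset.sum_congr rfl hstep, Finset.sum_range_sub (fun i : ℕ => g (i:ℤ))]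
  simp only [hg]
  have e0 : C (s:ℤ) ((0:ℕ):ℤ) * 0 = 0 := by ring
  have h1 : C (r:ℤ) (((r+s+2:ℕ):ℤ)-1) = 0 := C_gt (by push_cast; omega)
  have h2 : C (s:ℤ) (((0:ℕ):ℤ)-1) = 0 := C_neg (by norm_num)
  rw [h1, h2]; ring

theorem stmt_19 (r s k : ℕ) (hr : 1 ≤ r) (hs : 1 ≤ s) (hk : 1 ≤ k)
    (hkrs : k ≤ r + s + 1) :
    ((Nat.factorial (r + 1) : ℚ) * Nat.factorial s / (r + s + 1)) * B (r + s + 1) s k =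
      ((Nat.factorial r : ℚ) * Nat.factorial (s + 1) / (r + s + 1)) * B (r + s + 1) (s + 1) k +
        ((r : ℚ) - s) * ((Nat.factorial r : ℚ) * Nat.factorial s / (r + s)) * B (r + s) s k := by
  have hB1 : B (r+s+1) s k = (((r:ℚ)+s+1)/k) * ∑ j ∈ range (r+s+2),
      C s (j:ℤ) * C ((r:ℤ)+1) (j:ℤ) * C ((r:ℤ)+s-j) ((k:ℤ)-j-1) := by
    unfold B
    rw [show ((r+s+1:ℕ):ℚ) = (r:ℚ)+s+1 by push_cast; ring]
    congr 1
    refine Finset.sum_congr rfl fun j _ => ?_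
    rw [show ((r+s+1:ℕ):ℤ) - (s:ℤ) = (r:ℤ)+1 by push_cast; ring,
      show ((r+s+1:ℕ):ℤ) - (j:ℤ) - 1 = (r:ℤ)+s-j by push_cast; ring]
  have hB2 : B (r+s+1) (s+1) k = (((r:ℚ)+s+1)/k) * ∑ j ∈ range (r+s+2),
      C ((s:ℤ)+1) (j:ℤ) * C r (j:ℤ) * C ((r:ℤ)+s-j) ((k:ℤ)-j-1) := by
    unfold B
    rw [show ((r+s+1:ℕ):ℚ) = (r:ℚ)+s+1 by push_cast; ring]
    congr 1
    refine Finset.sum_congr rfl fun j _ => ?_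
    rw [show ((s+1:ℕ):ℤ) = (s:ℤ)+1 by push_cast; ring,
      show ((r+s+1:ℕ):ℤ) - ((s:ℤ)+1) = (r:ℤ) by push_cast; ring,
      show ((r+s+1:ℕ):ℤ) - (j:ℤ) - 1 = (r:ℤ)+s-j by push_cast; ring]
  have hB3 : B (r+s) s k = (((r:ℚ)+s)/k) * ∑ j ∈ range (r+s+2),
      C s (j:ℤ) * C r (j:ℤ) * C ((r:ℤ)+s-j-1) ((k:ℤ)-j-1) := by
    unfold B
    rw [show ((r+s:ℕ):ℚ) = (r:ℚ)+s by push_cast; ring]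
    congr 1
    rw [Finset.sum_range_succ (n := r+s+1)]
    have hz : C (s:ℤ) ((r+s+1:ℕ):ℤ) = 0 := C_gt (by push_cast; omega)
    rw [hz]
    rw [Finset.sum_congr rfl (fun j _ => ?_)]
    · ring
    · rw [show ((r+s:ℕ):ℤ) - (s:ℤ) = (r:ℤ) by push_cast; ring,
        show ((r+s:ℕ):ℤ) - (j:ℤ) - 1 = (r:ℤ)+s-j-1 by push_cast; ring]
  have hK := keysum r s k hr hs
  have hK' : ((r:ℚ)+1) * (∑ j ∈ range (r+s+2),
        C s (j:ℤ) * C ((r:ℤ)+1) (j:ℤ) * C ((r:ℤ)+s-j) ((k:ℤ)-j-1))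
      - ((s:ℚ)+1) * (∑ j ∈ range (r+s+2),
        C ((s:ℤ)+1) (j:ℤ) * C r (j:ℤ) * C ((r:ℤ)+s-j) ((k:ℤ)-j-1))
      - ((r:ℚ)-s) * (∑ j ∈ range (r+s+2),
        C s (j:ℤ) * C r (j:ℤ) * C ((r:ℤ)+s-j-1) ((k:ℤ)-j-1)) = 0 := by
    rw [Finset.mul_sum, Finset.mul_sum, Finset.mul_sum, ← Finset.sum_sub_distrib,
      ← Finset.sum_sub_distrib]
    exact hK
  rw [hB1, hB2, hB3]
  set S1 := ∑ j ∈ range (r+s+2),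
      C s (j:ℤ) * C ((r:ℤ)+1) (j:ℤ) * C ((r:ℤ)+s-j) ((k:ℤ)-j-1) with hS1
  set S2 := ∑ j ∈ range (r+s+2),
      C ((s:ℤ)+1) (j:ℤ) * C r (j:ℤ) * C ((r:ℤ)+s-j) ((k:ℤ)-j-1) with hS2
  set S3 := ∑ j ∈ range (r+s+2),
      C s (j:ℤ) * C r (j:ℤ) * C ((r:ℤ)+s-j-1) ((k:ℤ)-j-1) with hS3
  have hkne : (k:ℚ) ≠ 0 := by positivity
  have hnne : (r:ℚ)+s+1 ≠ 0 := by positivity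
  have hmne : (r:ℚ)+s ≠ 0 := by positivity
  have main : ((Nat.factorial (r+1) : ℚ) * Nat.factorial s) * S1
      = ((Nat.factorial r : ℚ) * Nat.factorial (s+1)) * S2
        + ((r:ℚ)-s) * ((Nat.factorial r : ℚ) * Nat.factorial s) * S3 := by
    push_cast [Nat.factorial_succ]
    linear_combination ((Nat.factorial r : ℚ) * (Nat.factorial s : ℚ)) * hK'
  have t1 : ((Nat.factorial (r+1) : ℚ) * Nat.factorial s / ((r:ℚ)+s+1))
      * ((((r:ℚ)+s+1))/k * S1)
      = ((Nat.factorial (r+1) : ℚ) * Nat.factorial s * S1)/k := by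
    field_simp
  have t2 : ((Nat.factorial r : ℚ) * Nat.factorial (s+1) / ((r:ℚ)+s+1))
      * ((((r:ℚ)+s+1))/k * S2)
      = ((Nat.factorial r : ℚ) * Nat.factorial (s+1) * S2)/k := by
    field_simp
  have t3 : ((r:ℚ)-s) * ((Nat.factorial r : ℚ) * Nat.factorial s / ((r:ℚ)+s))
      * ((((r:ℚ)+s))/k * S3)
      = (((r:ℚ)-s) * ((Nat.factorial r : ℚ) * Nat.factorial s) * S3)/k := by
    field_simp
  rw [t1, t2, t3, ← add_div, div_eq_div_iff hkne hkne]
  linear_combination (k:ℚ) * main
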